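/- arXiv:1408.0489 — 2 statements merged into one kernel-verified Lean document; each statement's English description precedes it below -/
import Mathlib

section
/- Let η(0),...,η(ℓ-1) be i.i.d. Bernoulli(ρ) and set η^ℓ = (1/ℓ)∑ η(y), and g(η^ℓ) = (η^ℓ-ρ)² - (1/(ℓ-1))χ(η^ℓ) where χ(σ)=σ(1-σ). Then there exists a constant C (depending only on ρ) such that the variance of g(η^ℓ) under ν_ρ is at most C/ℓ². -/
open Finset

namespace Stmt2Aux

/-- product Bernoulli weight -/
def W (ρ : ℝ) (n : ℕ) (η : Fin n → Bool) : ℝ := ∏ y, (if η y then ρ else 1 - ρ)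

/-- centered sum -/
def T (ρ : ℝ) (n : ℕ) (η : Fin n → Bool) : ℝ :=
  (∑ y, (if η y then (1:ℝ) else 0)) - n * ρ

/-- expectation -/
def Ee (ρ : ℝ) (n : ℕ) (f : (Fin n → Bool) → ℝ) : ℝ := ∑ η, W ρ n η * f η

lemma W_cons (ρ : ℝ) (n : ℕ) (b : Bool) (η : Fin n → Bool) :
    W ρ (n+1) (Fin.cons b η) = (if b then ρ else 1 - ρ) * W ρ n η := by
  simp [W, Fin.prod_univ_succ]

lemma T_cons (ρ : ℝ) (n : ℕ) (b : Bool) (η : Fin n → Bool) :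
    T ρ (n+1) (Fin.cons b η) = ((if b then (1:ℝ) else 0) - ρ) + T ρ n η := by
  simp only [T, Fin.sum_univ_succ, Fin.cons_zero, Fin.cons_succ]
  push_cast
  ring

lemma Ee_succ (ρ : ℝ) (n : ℕ) (f : (Fin (n+1) → Bool) → ℝ) :
    Ee ρ (n+1) f = ρ * Ee ρ n (fun η => f (Fin.cons true η))
      + (1 - ρ) * Ee ρ n (fun η => f (Fin.cons false η)) := by
  have h := Equiv.sum_comp (Fin.consEquiv (fun _ : Fin (n+1) => Bool))
    (fun η => W ρ (n+1) η * f η)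
  rw [Ee, ← h, Fintype.sum_prod_type, Fintype.sum_bool]
  have e1 : ∀ (b : Bool) (η : Fin n → Bool),
      (Fin.consEquiv (fun _ : Fin (n+1) => Bool)) (b, η) = Fin.cons b η := fun _ _ => rfl
  simp only [e1, W_cons, Ee, Finset.mul_sum]
  congr 1 <;> (apply Finset.sum_congr rfl; intro η _; simp; ring)

lemma Ee_expand4 (ρ : ℝ) (n : ℕ) (c : ℝ) :
    Ee ρ n (fun η => (c + T ρ n η)^4) =
      Ee ρ n (fun η => (T ρ n η)^4) + (4*c) * Ee ρ n (fun η => (T ρ n η)^3)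
      + (6*c^2) * Ee ρ n (fun η => (T ρ n η)^2) + (4*c^3) * Ee ρ n (fun η => T ρ n η)
      + c^4 * Ee ρ n (fun _ => 1) := by
  have h : ∀ η, W ρ n η * (c + T ρ n η)^4 =
      W ρ n η * (T ρ n η)^4 + (4*c) * (W ρ n η * (T ρ n η)^3)
      + (6*c^2) * (W ρ n η * (T ρ n η)^2) + (4*c^3) * (W ρ n η * T ρ n η)
      + c^4 * (W ρ n η * 1) := fun η => by ring
  simp only [Ee, h, Finset.sum_add_distrib, ← Finset.mul_sum]

lemma Ee_expand3 (ρ : ℝ) (n : ℕ) (c : ℝ) :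
    Ee ρ n (fun η => (c + T ρ n η)^3) =
      Ee ρ n (fun η => (T ρ n η)^3) + (3*c) * Ee ρ n (fun η => (T ρ n η)^2)
      + (3*c^2) * Ee ρ n (fun η => T ρ n η) + c^3 * Ee ρ n (fun _ => 1) := by
  have h : ∀ η, W ρ n η * (c + T ρ n η)^3 =
      W ρ n η * (T ρ n η)^3 + (3*c) * (W ρ n η * (T ρ n η)^2)
      + (3*c^2) * (W ρ n η * T ρ n η) + c^3 * (W ρ n η * 1) := fun η => by ring
  simp only [Ee, h, Finset.sum_add_distrib, ← Finset.mul_sum]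

lemma Ee_expand2 (ρ : ℝ) (n : ℕ) (c : ℝ) :
    Ee ρ n (fun η => (c + T ρ n η)^2) =
      Ee ρ n (fun η => (T ρ n η)^2) + (2*c) * Ee ρ n (fun η => T ρ n η)
      + c^2 * Ee ρ n (fun _ => 1) := by
  have h : ∀ η, W ρ n η * (c + T ρ n η)^2 =
      W ρ n η * (T ρ n η)^2 + (2*c) * (W ρ n η * T ρ n η) + c^2 * (W ρ n η * 1) :=
    fun η => by ring
  simp only [Ee, h, Finset.sum_add_distrib, ← Finset.mul_sum]

lemma Ee_expand1 (ρ : ℝ) (n : ℕ) (c : ℝ) :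
    Ee ρ n (fun η => c + T ρ n η) =
      Ee ρ n (fun η => T ρ n η) + c * Ee ρ n (fun _ => 1) := by
  have h : ∀ η, W ρ n η * (c + T ρ n η) =
      W ρ n η * T ρ n η + c * (W ρ n η * 1) := fun η => by ring
  simp only [Ee, h, Finset.sum_add_distrib, ← Finset.mul_sum]

lemma Ee_zero_fun (ρ : ℝ) (f : (Fin 0 → Bool) → ℝ) : Ee ρ 0 f = f (fun i => i.elim0) := by
  rw [Ee]
  rw [Finset.sum_eq_single_of_mem (fun i => i.elim0) (Finset.mem_univ _)]
  · simp [W]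
  · intro b _ hb
    exact absurd (funext fun i => i.elim0) hb

lemma Ee_one (ρ : ℝ) (n : ℕ) : Ee ρ n (fun _ => 1) = 1 := by
  induction n with
  | zero => simp [Ee_zero_fun]
  | succ n ih => rw [Ee_succ, ih]; ring

lemma moments (ρ : ℝ) (n : ℕ) :
    Ee ρ n (fun η => T ρ n η) = 0 ∧
    Ee ρ n (fun η => (T ρ n η)^2) = n * (ρ * (1 - ρ)) ∧
    Ee ρ n (fun η => (T ρ n η)^3) = n * (ρ * (1 - ρ) * (1 - 2*ρ)) ∧
    Ee ρ n (fun η => (T ρ n η)^4) =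
      n * (ρ * (1 - ρ) * ((1-ρ)^3 + ρ^3)) + 3 * n * (n - 1) * (ρ * (1 - ρ))^2 := by
  induction n with
  | zero =>
    have hT : T ρ 0 (fun i => i.elim0) = 0 := by simp [T]
    refine ⟨?_, ?_, ?_, ?_⟩ <;> simp [Ee_zero_fun, hT]
  | succ n ih =>
    obtain ⟨h1, h2, h3, h4⟩ := ih
    have hE1 := Ee_one ρ n
    refine ⟨?_, ?_, ?_, ?_⟩
    · rw [Ee_succ]
      simp only [T_cons]
      rw [Ee_expand1, Ee_expand1, h1, hE1]
      norm_num
      ring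
    · rw [Ee_succ]
      simp only [T_cons]
      rw [Ee_expand2, Ee_expand2, h1, h2, hE1]
      push_cast
      ring
    · rw [Ee_succ]
      simp only [T_cons]
      rw [Ee_expand3, Ee_expand3, h1, h2, h3, hE1]
      push_cast
      ring
    · rw [Ee_succ]
      simp only [T_cons]
      rw [Ee_expand4, Ee_expand4, h1, h2, h3, h4, hE1]
      push_cast
      ring

lemma final_bound (ρ : ℝ) (h0 : 0 < ρ) (h1 : ρ < 1) (ℓ : ℕ) (hL2 : (2:ℝ) ≤ (ℓ:ℝ)) :
    (2 / (ℓ:ℝ)^4) * Ee ρ ℓ (fun η => (T ρ ℓ η)^4) + (1/8) * (1/((ℓ:ℝ)-1))^2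
      ≤ 2 / (ℓ:ℝ)^2 := by
  have hL0 : (0:ℝ) < (ℓ:ℝ) := by linarith
  have hL1 : (0:ℝ) < (ℓ:ℝ) - 1 := by linarith
  have hσ : 0 < ρ * (1 - ρ) := by nlinarith
  have hσ4 : ρ * (1 - ρ) ≤ 1/4 := by nlinarith [sq_nonneg (ρ - 1/2)]
  have hμ4 : ρ * (1 - ρ) * ((1-ρ)^3 + ρ^3) ≤ 1/4 := by nlinarith [sq_nonneg (ρ - 1/2)]
  have hM4 : Ee ρ ℓ (fun η => (T ρ ℓ η)^4) ≤ (ℓ:ℝ)/4 + 3 * (ℓ:ℝ)^2 / 16 := by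
    obtain ⟨-, -, -, h4⟩ := moments ρ ℓ
    rw [h4]
    have hx2 : (ρ*(1-ρ))^2 ≤ 1/16 := by nlinarith
    have t3 : 3*(ℓ:ℝ)*((ℓ:ℝ)-1)*(ρ*(1-ρ))^2 ≤ 3*(ℓ:ℝ)^2*(1/16) :=
      mul_le_mul (by nlinarith) hx2 (sq_nonneg _) (by positivity)
    have t1 : (ℓ:ℝ) * (ρ*(1-ρ)*((1-ρ)^3 + ρ^3)) ≤ (ℓ:ℝ)*(1/4) :=
      mul_le_mul_of_nonneg_left hμ4 hL0.le
    linarith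
  have hb1 : (2 / (ℓ:ℝ)^4) * ((ℓ:ℝ)/4 + 3 * (ℓ:ℝ)^2 / 16) ≤ (7/8) / (ℓ:ℝ)^2 := by
    rw [div_mul_eq_mul_div, div_le_div_iff₀ (by positivity) (by positivity)]
    nlinarith [mul_nonneg (mul_nonneg (mul_nonneg hL0.le hL0.le) hL0.le) hL1.le]
  have hb2 : (1/8) * (1/((ℓ:ℝ)-1))^2 ≤ (1/2) / (ℓ:ℝ)^2 := by
    rw [div_pow, one_pow, mul_one_div, div_le_div_iff₀ (by positivity) (by positivity)]
    nlinarith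
  have hmul : (2 / (ℓ:ℝ)^4) * Ee ρ ℓ (fun η => (T ρ ℓ η)^4)
      ≤ (2 / (ℓ:ℝ)^4) * ((ℓ:ℝ)/4 + 3 * (ℓ:ℝ)^2 / 16) :=
    mul_le_mul_of_nonneg_left hM4 (by positivity)
  have hfin : (7/8) / (ℓ:ℝ)^2 + (1/2) / (ℓ:ℝ)^2 ≤ 2 / (ℓ:ℝ)^2 := by
    rw [← add_div, div_le_div_iff₀ (by positivity) (by positivity)]
    nlinarith
  linarith

end Stmt2Aux

open Stmt2Aux in
/-- Variance bound: for i.i.d. Bernoulli(ρ) variables, with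
`g(m) = (m-ρ)² - χ(m)/(ℓ-1)` evaluated at the empirical density `η^ℓ`,
there is a constant `C = C(ρ)` such that `Var_ρ[g(η^ℓ)] ≤ C/ℓ²` for every `ℓ ≥ 2`. -/
theorem stmt2 (ρ : ℝ) (h0 : 0 < ρ) (h1 : ρ < 1) :
    ∃ C : ℝ, 0 < C ∧ ∀ ℓ : ℕ, 2 ≤ ℓ →
      let ind : Bool → ℝ := fun b => if b then 1 else 0
      let w : (Fin ℓ → Bool) → ℝ := fun η => ∏ y, (if η y then ρ else 1 - ρ)
      let avg : (Fin ℓ → Bool) → ℝ := fun η => (∑ y, ind (η y)) / ℓ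
      let g : ℝ → ℝ := fun m => (m - ρ) ^ 2 - (1 / ((ℓ : ℝ) - 1)) * (m * (1 - m))
      let E : ((Fin ℓ → Bool) → ℝ) → ℝ := fun f => ∑ η, w η * f η
      E (fun η => (g (avg η)) ^ 2) - (E (fun η => g (avg η))) ^ 2 ≤ C / (ℓ : ℝ) ^ 2 := by
  refine ⟨2, by norm_num, ?_⟩
  intro ℓ hℓ ind w avg g E
  have hL2 : (2:ℝ) ≤ (ℓ:ℝ) := by exact_mod_cast hℓ
  have hL0 : (0:ℝ) < (ℓ:ℝ) := by linarith
  have hL1 : (0:ℝ) < (ℓ:ℝ) - 1 := by linarith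
  -- basic facts
  have hw : ∀ η : Fin ℓ → Bool, 0 ≤ w η := by
    intro η
    apply Finset.prod_nonneg
    intro y _
    by_cases h : η y <;> simp [h] <;> linarith
  have havg01 : ∀ η : Fin ℓ → Bool, 0 ≤ avg η ∧ avg η ≤ 1 := by
    intro η
    have hsum0 : (0:ℝ) ≤ ∑ y, ind (η y) := by
      apply Finset.sum_nonneg; intro y _; by_cases h : η y <;> simp [ind, h]
    have hsum1 : ∑ y, ind (η y) ≤ (ℓ:ℝ) := by
      calc ∑ y, ind (η y) ≤ ∑ _y : Fin ℓ, (1:ℝ) := by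
            apply Finset.sum_le_sum; intro y _; by_cases h : η y <;> simp [ind, h]
        _ = (ℓ:ℝ) := by simp
    constructor
    · exact div_nonneg hsum0 hL0.le
    · rw [div_le_one hL0]; exact hsum1
  have hTavg : ∀ η : Fin ℓ → Bool, avg η - ρ = T ρ ℓ η / (ℓ:ℝ) := by
    intro η
    simp only [T, avg, ind]
    field_simp
  -- pointwise bound on g²
  have hpt : ∀ η : Fin ℓ → Bool,
      (g (avg η))^2 ≤ (2 / (ℓ:ℝ)^4) * (T ρ ℓ η)^4 + (1/8) * (1/((ℓ:ℝ)-1))^2 := by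
    intro η
    obtain ⟨ha0, ha1⟩ := havg01 η
    have hχ0 : 0 ≤ avg η * (1 - avg η) := mul_nonneg ha0 (by linarith)
    have hχ1 : avg η * (1 - avg η) ≤ 1/4 := by nlinarith [sq_nonneg (avg η - 1/2)]
    have hA : (avg η - ρ)^2 = (T ρ ℓ η)^2 / (ℓ:ℝ)^2 := by
      rw [hTavg η]; field_simp
    have hA2 : ((avg η - ρ)^2)^2 = (T ρ ℓ η)^4 / (ℓ:ℝ)^4 := by
      rw [hA]; field_simp
    have he : (0:ℝ) < 1/((ℓ:ℝ)-1) := by positivity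
    have hB2 : ((1/((ℓ:ℝ)-1)) * (avg η * (1 - avg η)))^2 ≤ (1/16) * (1/((ℓ:ℝ)-1))^2 := by
      rw [mul_pow]
      have : (avg η * (1 - avg η))^2 ≤ 1/16 := by nlinarith
      nlinarith [sq_nonneg (1/((ℓ:ℝ)-1))]
    have hgsq : (g (avg η))^2 ≤ 2 * ((avg η - ρ)^2)^2
        + 2 * ((1/((ℓ:ℝ)-1)) * (avg η * (1 - avg η)))^2 := by
      simp only [g]
      nlinarith [sq_nonneg ((avg η - ρ)^2 + (1/((ℓ:ℝ)-1)) * (avg η * (1 - avg η)))]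
    calc (g (avg η))^2 ≤ 2 * ((avg η - ρ)^2)^2
          + 2 * ((1/((ℓ:ℝ)-1)) * (avg η * (1 - avg η)))^2 := hgsq
      _ ≤ 2 * ((T ρ ℓ η)^4 / (ℓ:ℝ)^4) + 2 * ((1/16) * (1/((ℓ:ℝ)-1))^2) := by
          rw [hA2]; linarith
      _ = (2 / (ℓ:ℝ)^4) * (T ρ ℓ η)^4 + (1/8) * (1/((ℓ:ℝ)-1))^2 := by ring
  -- expectation bound
  have hEg2 : E (fun η => (g (avg η))^2)
      ≤ (2 / (ℓ:ℝ)^4) * Ee ρ ℓ (fun η => (T ρ ℓ η)^4) + (1/8) * (1/((ℓ:ℝ)-1))^2 := by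
    have step1 : E (fun η => (g (avg η))^2)
        ≤ ∑ η, w η * ((2 / (ℓ:ℝ)^4) * (T ρ ℓ η)^4 + (1/8) * (1/((ℓ:ℝ)-1))^2) := by
      apply Finset.sum_le_sum
      intro η _
      exact mul_le_mul_of_nonneg_left (hpt η) (hw η)
    have step2 : ∑ η, w η * ((2 / (ℓ:ℝ)^4) * (T ρ ℓ η)^4 + (1/8) * (1/((ℓ:ℝ)-1))^2)
        = (2 / (ℓ:ℝ)^4) * Ee ρ ℓ (fun η => (T ρ ℓ η)^4)
          + ((1/8) * (1/((ℓ:ℝ)-1))^2) * Ee ρ ℓ (fun _ => 1) := by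
      have h : ∀ η, w η * ((2 / (ℓ:ℝ)^4) * (T ρ ℓ η)^4 + (1/8) * (1/((ℓ:ℝ)-1))^2)
          = (2 / (ℓ:ℝ)^4) * (W ρ ℓ η * (T ρ ℓ η)^4)
            + ((1/8) * (1/((ℓ:ℝ)-1))^2) * (W ρ ℓ η * 1) := by
        intro η
        have : w η = W ρ ℓ η := rfl
        rw [this]; ring
      simp only [h, Finset.sum_add_distrib, ← Finset.mul_sum]
      rfl
    rw [step2, Ee_one] at step1
    linarith [step1]
  have hvar : E (fun η => (g (avg η)) ^ 2) - (E (fun η => g (avg η))) ^ 2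
      ≤ E (fun η => (g (avg η)) ^ 2) := sub_le_self _ (sq_nonneg _)
  exact le_trans (le_trans hvar hEg2) (final_bound ρ h0 h1 ℓ hL2)
end

section
/- Let η^ℓ = (1/ℓ)∑_{y=0}^{ℓ-1}η(y) and η^{2ℓ} = (1/(2ℓ))∑_{y=0}^{2ℓ-1}η(y) for i.i.d. Bernoulli(ρ) variables η(0),...,η(2ℓ-1). Define Ṽ = (η^ℓ-ρ)² - χ(η^ℓ)/(ℓ-1) - (η^{2ℓ}-ρ)² + χ(η^{2ℓ})/(2ℓ-1) with χ(σ)=σ(1-σ). Then there is a constant C = C(ρ) with Var_ρ[Ṽ] ≤ C/ℓ². -/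
open Finset

noncomputable def pb (ρ : ℝ) (b : Bool) : ℝ := if b then ρ else 1 - ρ
noncomputable def indb (b : Bool) : ℝ := if b then 1 else 0

noncomputable def Em (ρ : ℝ) (n : ℕ) (f : (Fin n → Bool) → ℝ) : ℝ :=
  ∑ η : Fin n → Bool, (∏ y, pb ρ (η y)) * f η

lemma Em_zero (ρ : ℝ) (f : (Fin 0 → Bool) → ℝ) : Em ρ 0 f = f Fin.elim0 := by
  rw [Em]
  rw [Fintype.sum_eq_single (Fin.elim0 : Fin 0 → Bool)]
  · simp
  · intro x hx; exact absurd (funext fun i => i.elim0) hx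

lemma Em_succ (ρ : ℝ) (n : ℕ) (f : (Fin (n+1) → Bool) → ℝ) :
    Em ρ (n+1) f = ∑ b : Bool, pb ρ b * Em ρ n (fun σ => f (Fin.cons b σ)) := by
  rw [Em, ← (Fin.consEquiv (fun _ : Fin (n+1) => Bool)).sum_comp
    (fun η => (∏ y, pb ρ (η y)) * f η), Fintype.sum_prod_type]
  refine Finset.sum_congr rfl fun b _ => ?_
  rw [Em, Finset.mul_sum]
  refine Finset.sum_congr rfl fun σ _ => ?_
  have h1 : (Fin.consEquiv fun _ : Fin (n+1) => Bool) (b, σ) = Fin.cons b σ := rfl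
  rw [h1, Fin.prod_univ_succ, Fin.cons_zero]
  simp only [Fin.cons_succ]
  ring

lemma Em_const (ρ : ℝ) (n : ℕ) (c : ℝ) : Em ρ n (fun _ => c) = c := by
  induction n with
  | zero => rw [Em_zero]
  | succ n ih =>
    rw [Em_succ]
    simp only [ih]
    rw [Fintype.sum_bool]
    simp [pb]; ring

lemma Em_mono (ρ : ℝ) (h0 : 0 ≤ ρ) (h1 : ρ ≤ 1) (n : ℕ) {f g : (Fin n → Bool) → ℝ}
    (h : ∀ η, f η ≤ g η) : Em ρ n f ≤ Em ρ n g := by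
  refine Finset.sum_le_sum fun η _ => ?_
  refine mul_le_mul_of_nonneg_left (h η) ?_
  refine Finset.prod_nonneg fun y _ => ?_
  rcases η y with _ | _ <;> simp [pb] <;> linarith

lemma Em_const_mul (ρ : ℝ) (n : ℕ) (c : ℝ) (f : (Fin n → Bool) → ℝ) :
    Em ρ n (fun η => c * f η) = c * Em ρ n f := by
  rw [Em, Em, Finset.mul_sum]
  exact Finset.sum_congr rfl fun η _ => by ring

lemma Em_comb (ρ : ℝ) (n : ℕ) (c0 c1 c2 c3 c4 : ℝ) (T : (Fin n → Bool) → ℝ) :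
    Em ρ n (fun σ => c0 + c1 * T σ + c2 * (T σ)^2 + c3 * (T σ)^3 + c4 * (T σ)^4)
      = c0 + c1 * Em ρ n T + c2 * Em ρ n (fun σ => (T σ)^2)
        + c3 * Em ρ n (fun σ => (T σ)^3) + c4 * Em ρ n (fun σ => (T σ)^4) := by
  have mass : ∑ η : Fin n → Bool, (∏ y, pb ρ (η y)) = 1 := by
    have := Em_const ρ n 1
    simpa [Em] using this
  simp only [Em]
  have : ∀ x : Fin n → Bool, (∏ y, pb ρ (x y)) * (c0 + c1 * T x + c2 * (T x)^2 + c3 * (T x)^3 + c4 * (T x)^4)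
      = c0 * (∏ y, pb ρ (x y)) + (c1 * ((∏ y, pb ρ (x y)) * T x)
        + (c2 * ((∏ y, pb ρ (x y)) * (T x)^2) + (c3 * ((∏ y, pb ρ (x y)) * (T x)^3)
        + c4 * ((∏ y, pb ρ (x y)) * (T x)^4)))) := fun x => by ring
  rw [Finset.sum_congr rfl fun x _ => this x]
  rw [Finset.sum_add_distrib, Finset.sum_add_distrib, Finset.sum_add_distrib,
    Finset.sum_add_distrib, ← Finset.mul_sum, ← Finset.mul_sum, ← Finset.mul_sum,
    ← Finset.mul_sum, ← Finset.mul_sum, mass]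
  ring

lemma Em_comb2 (ρ : ℝ) (n : ℕ) (a b c : ℝ) (F G : (Fin n → Bool) → ℝ) :
    Em ρ n (fun η => a * F η + b * G η + c) = a * Em ρ n F + b * Em ρ n G + c := by
  have mass : ∑ η : Fin n → Bool, (∏ y, pb ρ (η y)) = 1 := by
    have := Em_const ρ n 1
    simpa [Em] using this
  simp only [Em]
  have : ∀ x : Fin n → Bool, (∏ y, pb ρ (x y)) * (a * F x + b * G x + c)
      = a * ((∏ y, pb ρ (x y)) * F x) + (b * ((∏ y, pb ρ (x y)) * G x)
        + c * (∏ y, pb ρ (x y))) := fun x => by ring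
  rw [Finset.sum_congr rfl fun x _ => this x]
  rw [Finset.sum_add_distrib, Finset.sum_add_distrib, ← Finset.mul_sum,
    ← Finset.mul_sum, ← Finset.mul_sum, mass]
  ring

lemma cons_dec (f : Bool → ℝ) {n : ℕ} (A : Finset (Fin (n+1))) (b : Bool) (σ : Fin n → Bool) :
    ∑ y ∈ A, f ((Fin.cons b σ : Fin (n+1) → Bool) y) = (if (0 : Fin (n+1)) ∈ A then f b else 0)
      + ∑ i ∈ univ.filter (fun i : Fin n => i.succ ∈ A), f (σ i) := by
  have h1 : ∑ y ∈ A, f ((Fin.cons b σ : Fin (n+1) → Bool) y)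
      = ∑ y : Fin (n+1), if y ∈ A then f ((Fin.cons b σ : Fin (n+1) → Bool) y) else 0 := by
    rw [Finset.sum_ite_mem, univ_inter]
  rw [h1, Fin.sum_univ_succ, Fin.cons_zero]
  simp only [Fin.cons_succ]
  rw [Finset.sum_filter]

lemma card_dec {n : ℕ} (A : Finset (Fin (n+1))) :
    (A.card : ℝ) = (if (0 : Fin (n+1)) ∈ A then 1 else 0)
      + ((univ.filter (fun i : Fin n => i.succ ∈ A)).card : ℝ) := by
  have h := cons_dec (fun _ => (1:ℝ)) A true (fun _ => true)
  simpa using h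

lemma Em_m1 (ρ : ℝ) (n : ℕ) : ∀ A : Finset (Fin n),
    Em ρ n (fun η => ∑ y ∈ A, (indb (η y) - ρ)) = 0 := by
  induction n with
  | zero =>
    intro A
    have hA : A = ∅ := Finset.eq_empty_of_forall_notMem fun y => y.elim0
    subst hA
    simpa using Em_const ρ 0 0
  | succ n ih =>
    intro A
    rw [Em_succ]
    set B := univ.filter (fun i : Fin n => i.succ ∈ A) with hB
    set xb : Bool → ℝ := fun b => if (0 : Fin (n+1)) ∈ A then indb b - ρ else 0 with hxb
    set T : (Fin n → Bool) → ℝ := fun σ => ∑ i ∈ B, (indb (σ i) - ρ) with hT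
    have hdec : ∀ b, (fun σ : Fin n → Bool => ∑ y ∈ A, (indb ((Fin.cons b σ : Fin (n+1) → Bool) y) - ρ))
        = fun σ => xb b + 1 * T σ + 0 * (T σ)^2 + 0 * (T σ)^3 + 0 * (T σ)^4 := by
      intro b
      funext σ
      have := cons_dec (fun v => indb v - ρ) A b σ
      rw [this]
      simp only [hxb, hT]
      by_cases h : (0 : Fin (n+1)) ∈ A <;> simp [h] <;> ring
    have hEb : ∀ b, Em ρ n (fun σ => ∑ y ∈ A, (indb ((Fin.cons b σ : Fin (n+1) → Bool) y) - ρ)) = xb b := by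
      intro b
      rw [hdec b, Em_comb, ih B]
      ring
    simp only [hEb]
    rw [Fintype.sum_bool]
    by_cases h : (0 : Fin (n+1)) ∈ A <;> simp [hxb, h, pb, indb] <;> ring

lemma Em_m2 (ρ : ℝ) (h0 : 0 ≤ ρ) (h1 : ρ ≤ 1) (n : ℕ) : ∀ A : Finset (Fin n),
    Em ρ n (fun η => (∑ y ∈ A, (indb (η y) - ρ))^2) ≤ (A.card : ℝ) / 4 := by
  induction n with
  | zero =>
    intro A
    have hA : A = ∅ := Finset.eq_empty_of_forall_notMem fun y => y.elim0
    subst hA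
    simpa using (le_of_eq (Em_const ρ 0 0))
  | succ n ih =>
    intro A
    rw [Em_succ]
    set B := univ.filter (fun i : Fin n => i.succ ∈ A) with hB
    set xb : Bool → ℝ := fun b => if (0 : Fin (n+1)) ∈ A then indb b - ρ else 0 with hxb
    set T : (Fin n → Bool) → ℝ := fun σ => ∑ i ∈ B, (indb (σ i) - ρ) with hT
    have hdec : ∀ b, (fun σ : Fin n → Bool => (∑ y ∈ A, (indb ((Fin.cons b σ : Fin (n+1) → Bool) y) - ρ))^2)
        = fun σ => (xb b)^2 + (2 * xb b) * T σ + 1 * (T σ)^2 + 0 * (T σ)^3 + 0 * (T σ)^4 := by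
      intro b
      funext σ
      rw [cons_dec (fun v => indb v - ρ) A b σ]
      simp only [hxb, hT]
      by_cases h : (0 : Fin (n+1)) ∈ A <;> simp [h] <;> ring
    have ht2 := ih B
    have hEb : ∀ b, Em ρ n (fun σ => (∑ y ∈ A, (indb ((Fin.cons b σ : Fin (n+1) → Bool) y) - ρ))^2)
        = (xb b)^2 + Em ρ n (fun σ => (T σ)^2) := by
      intro b
      rw [hdec b, Em_comb, Em_m1 ρ n B]
      ring
    simp only [hEb]
    rw [Fintype.sum_bool]
    rw [card_dec A, ← hB]
    set t2 := Em ρ n (fun σ => (T σ)^2)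
    by_cases h : (0 : Fin (n+1)) ∈ A
    · simp only [hxb, h, if_true]
      simp [pb, indb]
      nlinarith [ht2, sq_nonneg (2*ρ-1)]
    · simp only [hxb, h, if_false]
      simp [pb, indb]
      nlinarith [ht2]

lemma Em_m4 (ρ : ℝ) (h0 : 0 ≤ ρ) (h1 : ρ ≤ 1) (n : ℕ) : ∀ A : Finset (Fin n),
    Em ρ n (fun η => (∑ y ∈ A, (indb (η y) - ρ))^4) ≤ (A.card : ℝ)^2 := by
  induction n with
  | zero =>
    intro A
    have hA : A = ∅ := Finset.eq_empty_of_forall_notMem fun y => y.elim0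
    subst hA
    simpa using (le_of_eq (Em_const ρ 0 0))
  | succ n ih =>
    intro A
    rw [Em_succ]
    set B := univ.filter (fun i : Fin n => i.succ ∈ A) with hB
    set xb : Bool → ℝ := fun b => if (0 : Fin (n+1)) ∈ A then indb b - ρ else 0 with hxb
    set T : (Fin n → Bool) → ℝ := fun σ => ∑ i ∈ B, (indb (σ i) - ρ) with hT
    have hdec : ∀ b, (fun σ : Fin n → Bool => (∑ y ∈ A, (indb ((Fin.cons b σ : Fin (n+1) → Bool) y) - ρ))^4)
        = fun σ => (xb b)^4 + (4 * (xb b)^3) * T σ + (6 * (xb b)^2) * (T σ)^2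
            + (4 * xb b) * (T σ)^3 + 1 * (T σ)^4 := by
      intro b
      funext σ
      rw [cons_dec (fun v => indb v - ρ) A b σ]
      simp only [hxb, hT]
      by_cases h : (0 : Fin (n+1)) ∈ A <;> simp [h] <;> ring
    have hEb : ∀ b, Em ρ n (fun σ => (∑ y ∈ A, (indb ((Fin.cons b σ : Fin (n+1) → Bool) y) - ρ))^4)
        = (xb b)^4 + (6 * (xb b)^2) * Em ρ n (fun σ => (T σ)^2)
          + (4 * xb b) * Em ρ n (fun σ => (T σ)^3) + Em ρ n (fun σ => (T σ)^4) := by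
      intro b
      rw [hdec b, Em_comb, Em_m1 ρ n B]
      ring
    simp only [hEb]
    rw [Fintype.sum_bool]
    rw [card_dec A, ← hB]
    set t2 := Em ρ n (fun σ => (T σ)^2) with h2'
    set t3 := Em ρ n (fun σ => (T σ)^3) with h3'
    set t4 := Em ρ n (fun σ => (T σ)^4) with h4'
    have ht2 : t2 ≤ (B.card : ℝ) / 4 := Em_m2 ρ h0 h1 n B
    have ht4 : t4 ≤ (B.card : ℝ)^2 := ih B
    have hcB : (0:ℝ) ≤ (B.card : ℝ) := Nat.cast_nonneg _
    by_cases h : (0 : Fin (n+1)) ∈ A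
    · simp only [hxb, h, if_true]
      simp [pb, indb]
      have hτ0 : 0 ≤ ρ*(1-ρ) := by nlinarith
      have hτ1 : ρ*(1-ρ) ≤ 1/4 := by nlinarith [sq_nonneg (2*ρ-1)]
      have e1 : (ρ*(1-ρ))*t2 ≤ (ρ*(1-ρ))*((B.card : ℝ)/4) :=
        mul_le_mul_of_nonneg_left ht2 hτ0
      have e2 : (ρ*(1-ρ))*((B.card : ℝ)/4) ≤ (1/4)*((B.card : ℝ)/4) :=
        mul_le_mul_of_nonneg_right hτ1 (by positivity)
      have haux : (1-ρ)^3 + ρ^3 ≤ 1 := by nlinarith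
      have haux0 : 0 ≤ (1-ρ)^3 + ρ^3 := by nlinarith
      have hμ4' : (ρ*(1-ρ)) * ((1-ρ)^3 + ρ^3) ≤ (1/4)*1 :=
        mul_le_mul hτ1 haux haux0 (by norm_num)
      have hμ4 : ρ*(1-ρ)^4 + (1-ρ)*ρ^4 ≤ 1/4 := by nlinarith [hμ4']
      nlinarith [ht4, hcB, e1, e2, hμ4]
    · simp only [hxb, h, if_false]
      simp [pb, indb]
      nlinarith [ht4]

lemma ptbound (ρ L a c : ℝ) (hL : 2 ≤ L) (ha0 : 0 ≤ a) (ha1 : a ≤ 1)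
    (hc0 : 0 ≤ c) (hc1 : c ≤ 1) :
    ((a - ρ)^2 - a*(1-a)/(L-1) - (c-ρ)^2 + c*(1-c)/(2*L-1))^2
      ≤ 4*(a-ρ)^4 + 4*(c-ρ)^4 + 2/L^2 := by
  have hL0 : (0:ℝ) < L := by linarith
  have hden1 : (0:ℝ) < L - 1 := by linarith
  have hden2 : (0:ℝ) < 2*L - 1 := by linarith
  have hnum1 : 0 ≤ a*(1-a) ∧ a*(1-a) ≤ 1/4 :=
    ⟨mul_nonneg ha0 (by linarith), by nlinarith [sq_nonneg (2*a-1)]⟩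
  have hnum2 : 0 ≤ c*(1-c) ∧ c*(1-c) ≤ 1/4 :=
    ⟨mul_nonneg hc0 (by linarith), by nlinarith [sq_nonneg (2*c-1)]⟩
  set d1 := a*(1-a)/(L-1) with hd1def
  set d2 := c*(1-c)/(2*L-1) with hd2def
  have hd1 : 0 ≤ d1 := div_nonneg hnum1.1 hden1.le
  have hd2 : 0 ≤ d2 := div_nonneg hnum2.1 hden2.le
  have hd1' : d1 ≤ 1/(2*L) := by
    have h1' : d1 ≤ (1/4)/(L-1) := (div_le_div_iff_of_pos_right hden1).2 hnum1.2
    have h2' : (1/4)/(L-1) ≤ 1/(2*L) := by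
      rw [div_le_div_iff₀ hden1 (by positivity)]
      linarith
    linarith
  have hd2' : d2 ≤ 1/(2*L) := by
    have h1' : d2 ≤ (1/4)/(2*L-1) := (div_le_div_iff_of_pos_right hden2).2 hnum2.2
    have h2' : (1/4)/(2*L-1) ≤ 1/(2*L) := by
      rw [div_le_div_iff₀ hden2 (by positivity)]
      linarith
    linarith
  set ε := 1/L with hεdef
  have hεpos : 0 < ε := by positivity
  have hd1'' : d1 ≤ ε/2 := by
    rw [hεdef, show (1:ℝ)/L/2 = 1/(2*L) from by ring]
    exact hd1'
  have hd2'' : d2 ≤ ε/2 := by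
    rw [hεdef, show (1:ℝ)/L/2 = 1/(2*L) from by ring]
    exact hd2'
  have hgoal2 : 2/L^2 = 2*ε^2 := by rw [hεdef]; ring
  rw [hgoal2]
  set P := (a-ρ)^2 with hP
  set Q := (c-ρ)^2 with hQ
  have hP4 : (a-ρ)^4 = P^2 := by rw [hP]; ring
  have hQ4 : (c-ρ)^4 = Q^2 := by rw [hQ]; ring
  rw [hP4, hQ4]
  clear_value d1 d2 P Q ε
  have key1 : 0 ≤ (ε/2 - (d2 - d1)) * ((d2 - d1) + ε/2) :=
    mul_nonneg (by linarith) (by linarith)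
  nlinarith [sq_nonneg (P - Q - (d2 - d1)), sq_nonneg (P + Q), key1]

/-- Renormalization-step variance bound: with `η^ℓ`, `η^{2ℓ}` the empirical densities in
boxes of sizes `ℓ` and `2ℓ` of i.i.d. Bernoulli(ρ) variables and
`Ṽ = (η^ℓ-ρ)² - χ(η^ℓ)/(ℓ-1) - (η^{2ℓ}-ρ)² + χ(η^{2ℓ})/(2ℓ-1)`, there is a constant
`C = C(ρ)` with `Var_ρ[Ṽ] ≤ C/ℓ²` for all `ℓ ≥ 2`. -/
theorem stmt15 (ρ : ℝ) (h0 : 0 < ρ) (h1 : ρ < 1) :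
    ∃ C : ℝ, 0 < C ∧ ∀ ℓ : ℕ, 2 ≤ ℓ →
      let ind : Bool → ℝ := fun b => if b then 1 else 0
      let w : (Fin (2 * ℓ) → Bool) → ℝ := fun η => ∏ y, (if η y then ρ else 1 - ρ)
      let avg1 : (Fin (2 * ℓ) → Bool) → ℝ := fun η =>
        (∑ y ∈ Finset.univ.filter (fun y : Fin (2 * ℓ) => (y : ℕ) < ℓ), ind (η y)) / ℓ
      let avg2 : (Fin (2 * ℓ) → Bool) → ℝ := fun η => (∑ y, ind (η y)) / (2 * ℓ)
      let V : (Fin (2 * ℓ) → Bool) → ℝ := fun η =>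
        (avg1 η - ρ) ^ 2 - (avg1 η * (1 - avg1 η)) / ((ℓ : ℝ) - 1)
          - (avg2 η - ρ) ^ 2 + (avg2 η * (1 - avg2 η)) / (2 * (ℓ : ℝ) - 1)
      let E : ((Fin (2 * ℓ) → Bool) → ℝ) → ℝ := fun f => ∑ η, w η * f η
      E (fun η => (V η) ^ 2) - (E V) ^ 2 ≤ C / (ℓ : ℝ) ^ 2 := by
  refine ⟨10, by norm_num, ?_⟩
  intro ℓ hℓ
  intro ind w avg1 avg2 V E
  have hℓR : (2:ℝ) ≤ (ℓ:ℝ) := by exact_mod_cast hℓ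
  have hℓ0 : (0:ℝ) < (ℓ:ℝ) := by linarith
  set A1 := Finset.univ.filter (fun y : Fin (2 * ℓ) => (y : ℕ) < ℓ) with hA1
  have hcardN : A1.card = ℓ := by
    have hb : A1.card = (Finset.univ : Finset (Fin ℓ)).card := by
      refine Finset.card_bij' (fun (y : Fin (2*ℓ)) (hy : y ∈ A1) => (⟨(y:ℕ), (Finset.mem_filter.1 hy).2⟩ : Fin ℓ))
        (fun (i : Fin ℓ) _ => (⟨(i:ℕ), by omega⟩ : Fin (2*ℓ)))
        (fun a ha => Finset.mem_univ _)
        (fun i hi => Finset.mem_filter.2 ⟨Finset.mem_univ _, i.2⟩)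
        (fun a ha => Fin.ext rfl) (fun i hi => Fin.ext rfl)
    rw [hb, Finset.card_univ, Fintype.card_fin]
  have hcard : (A1.card : ℝ) = (ℓ:ℝ) := by rw [hcardN]
  have hcardU : ((Finset.univ : Finset (Fin (2*ℓ))).card : ℝ) = 2*(ℓ:ℝ) := by
    rw [Finset.card_univ, Fintype.card_fin]; push_cast; ring
  -- identification with Em
  have hEV2 : E (fun η => (V η)^2) = Em ρ (2*ℓ) (fun η => (V η)^2) := rfl
  have hEV : E V = Em ρ (2*ℓ) V := rfl
  -- bounds on averages
  have hind : ∀ b, 0 ≤ indb b ∧ indb b ≤ 1 := by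
    intro b; rcases b <;> simp [indb]
  have havg1 : ∀ η, 0 ≤ avg1 η ∧ avg1 η ≤ 1 := by
    intro η
    have hsum : (0:ℝ) ≤ ∑ y ∈ A1, ind (η y) := Finset.sum_nonneg fun y _ => (hind _).1
    have hsum' : ∑ y ∈ A1, ind (η y) ≤ (ℓ:ℝ) := by
      calc ∑ y ∈ A1, ind (η y) ≤ ∑ y ∈ A1, 1 := Finset.sum_le_sum fun y _ => (hind _).2
        _ = (A1.card : ℝ) := by rw [Finset.sum_const, nsmul_eq_mul, mul_one]
        _ = (ℓ:ℝ) := hcard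
    constructor
    · exact div_nonneg hsum hℓ0.le
    · rw [div_le_one hℓ0]; exact hsum'
  have havg2 : ∀ η, 0 ≤ avg2 η ∧ avg2 η ≤ 1 := by
    intro η
    have h2ℓ0 : (0:ℝ) < 2*(ℓ:ℝ) := by linarith
    have hsum : (0:ℝ) ≤ ∑ y, ind (η y) := Finset.sum_nonneg fun y _ => (hind _).1
    have hsum' : ∑ y, ind (η y) ≤ 2*(ℓ:ℝ) := by
      calc ∑ y, ind (η y) ≤ ∑ y : Fin (2*ℓ), 1 := Finset.sum_le_sum fun y _ => (hind _).2
        _ = ((Finset.univ : Finset (Fin (2*ℓ))).card : ℝ) := by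
            rw [Finset.sum_const, nsmul_eq_mul, mul_one]
        _ = 2*(ℓ:ℝ) := hcardU
    constructor
    · exact div_nonneg hsum h2ℓ0.le
    · rw [div_le_one h2ℓ0]; exact hsum'
  -- centered representations
  have hU : ∀ η, avg1 η - ρ = (1/(ℓ:ℝ)) * ∑ y ∈ A1, (indb (η y) - ρ) := by
    intro η
    rw [Finset.sum_sub_distrib, Finset.sum_const, nsmul_eq_mul, hcard]
    show (∑ y ∈ A1, ind (η y)) / ℓ - ρ = _
    have : ∑ y ∈ A1, indb (η y) = ∑ y ∈ A1, ind (η y) := rfl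
    rw [this]
    field_simp
  have hW : ∀ η, avg2 η - ρ = (1/(2*(ℓ:ℝ))) * ∑ y, (indb (η y) - ρ) := by
    intro η
    rw [Finset.sum_sub_distrib, Finset.sum_const, nsmul_eq_mul, hcardU]
    show (∑ y, ind (η y)) / (2*(ℓ:ℝ)) - ρ = _
    have : ∑ y, indb (η y) = ∑ y, ind (η y) := rfl
    rw [this]
    field_simp
  -- pointwise bound
  have hpt : ∀ η, (V η)^2 ≤ 4*(avg1 η - ρ)^4 + 4*(avg2 η - ρ)^4 + 2/(ℓ:ℝ)^2 := by
    intro η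
    obtain ⟨ha0, ha1⟩ := havg1 η
    obtain ⟨hc0, hc1⟩ := havg2 η
    have hVval : V η = (avg1 η - ρ)^2 - (avg1 η)*(1-avg1 η)/((ℓ:ℝ)-1)
        - (avg2 η - ρ)^2 + (avg2 η)*(1-avg2 η)/(2*(ℓ:ℝ)-1) := rfl
    rw [hVval]
    exact ptbound ρ (ℓ:ℝ) (avg1 η) (avg2 η) hℓR ha0 ha1 hc0 hc1
  -- assemble
  have hmono : Em ρ (2*ℓ) (fun η => (V η)^2)
      ≤ Em ρ (2*ℓ) (fun η => 4*(avg1 η - ρ)^4 + 4*(avg2 η - ρ)^4 + 2/(ℓ:ℝ)^2) :=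
    Em_mono ρ h0.le h1.le (2*ℓ) hpt
  have hsplit : Em ρ (2*ℓ) (fun η => 4*(avg1 η - ρ)^4 + 4*(avg2 η - ρ)^4 + 2/(ℓ:ℝ)^2)
      = 4 * Em ρ (2*ℓ) (fun η => (avg1 η - ρ)^4) + 4 * Em ρ (2*ℓ) (fun η => (avg2 η - ρ)^4)
        + 2/(ℓ:ℝ)^2 := Em_comb2 ρ (2*ℓ) 4 4 (2/(ℓ:ℝ)^2) _ _
  have hB1 : Em ρ (2*ℓ) (fun η => (avg1 η - ρ)^4) ≤ 1/(ℓ:ℝ)^2 := by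
    have e1 : (fun η : Fin (2*ℓ) → Bool => (avg1 η - ρ)^4)
        = fun η => ((1:ℝ)/(ℓ:ℝ))^4 * (∑ y ∈ A1, (indb (η y) - ρ))^4 :=
      funext fun η => by rw [hU η, mul_pow]
    rw [e1, Em_const_mul]
    have h4 := Em_m4 ρ h0.le h1.le (2*ℓ) A1
    have hm : ((1:ℝ)/(ℓ:ℝ))^4 * Em ρ (2*ℓ) (fun η => (∑ y ∈ A1, (indb (η y) - ρ))^4)
        ≤ ((1:ℝ)/(ℓ:ℝ))^4 * ((A1.card:ℝ))^2 :=
      mul_le_mul_of_nonneg_left h4 (by positivity)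
    calc _ ≤ ((1:ℝ)/(ℓ:ℝ))^4 * ((A1.card:ℝ))^2 := hm
      _ = 1/(ℓ:ℝ)^2 := by rw [hcard]; field_simp
  have hB2 : Em ρ (2*ℓ) (fun η => (avg2 η - ρ)^4) ≤ 1/(ℓ:ℝ)^2 := by
    have e1 : (fun η : Fin (2*ℓ) → Bool => (avg2 η - ρ)^4)
        = fun η => ((1:ℝ)/(2*(ℓ:ℝ)))^4 * (∑ y, (indb (η y) - ρ))^4 :=
      funext fun η => by rw [hW η, mul_pow]
    rw [e1, Em_const_mul]
    have h4 := Em_m4 ρ h0.le h1.le (2*ℓ) (Finset.univ)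
    have hm : ((1:ℝ)/(2*(ℓ:ℝ)))^4 * Em ρ (2*ℓ) (fun η => (∑ y, (indb (η y) - ρ))^4)
        ≤ ((1:ℝ)/(2*(ℓ:ℝ)))^4 * (((Finset.univ : Finset (Fin (2*ℓ))).card:ℝ))^2 :=
      mul_le_mul_of_nonneg_left h4 (by positivity)
    calc _ ≤ ((1:ℝ)/(2*(ℓ:ℝ)))^4 * (((Finset.univ : Finset (Fin (2*ℓ))).card:ℝ))^2 := hm
      _ = 1/(4*(ℓ:ℝ)^2) := by rw [hcardU]; field_simp; ring
      _ ≤ 1/(ℓ:ℝ)^2 := by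
          apply div_le_div_of_nonneg_left (by norm_num) (by positivity) (by nlinarith)
  have key : Em ρ (2*ℓ) (fun η => (V η)^2) ≤ 10/(ℓ:ℝ)^2 := by
    calc Em ρ (2*ℓ) (fun η => (V η)^2)
        ≤ 4 * Em ρ (2*ℓ) (fun η => (avg1 η - ρ)^4) + 4 * Em ρ (2*ℓ) (fun η => (avg2 η - ρ)^4)
          + 2/(ℓ:ℝ)^2 := by rw [← hsplit]; exact hmono
      _ ≤ 4 * (1/(ℓ:ℝ)^2) + 4 * (1/(ℓ:ℝ)^2) + 2/(ℓ:ℝ)^2 := by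
          have := hB1; have := hB2
          gcongr
      _ = 10/(ℓ:ℝ)^2 := by ring
  have hsq := sq_nonneg (E V)
  linarith [key, hEV2.ge, hEV2.le]
end
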